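/- arXiv:1112.0508 — 2 statements merged into one kernel-verified Lean document; each statement's English description precedes it below -/
import Mathlib

section
/- Under the Plackett-Luce model with positive parameters v₁,…,v_M, the marginal probability that label i precedes label j equals v_i/(v_i + v_j), for any distinct i, j. -/
open Finset

/-- Plackett–Luce probability of a permutation `π` (mapping positions to labels). -/
noncomputable def PL {M : ℕ} (v : Fin M → ℝ) (π : Equiv.Perm (Fin M)) : ℝ :=
  ∏ k : Fin M, v (π k) / ∑ l ∈ Finset.Ici k, v (π l)

open Equiv

lemma Ici_succ_eq {M : ℕ} (k : Fin M) :
    Finset.Ici k.succ = (Finset.Ici k).map ⟨Fin.succ, Fin.succ_injective M⟩ := by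
  ext l
  simp only [mem_Ici, mem_map, Function.Embedding.coeFn_mk]
  constructor
  · intro h
    have hl : l ≠ 0 := by
      intro h0; subst h0
      exact absurd h (by simp [Fin.le_def])
    refine ⟨l.pred hl, ?_, Fin.succ_pred _ _⟩
    rw [Fin.le_def] at h ⊢
    simp only [Fin.val_succ] at h
    simp [Fin.coe_pred]
    omega
  · rintro ⟨m, hm, rfl⟩
    exact Fin.succ_le_succ_iff.mpr hm

lemma Ici_succ_sum {M : ℕ} (k : Fin M) (f : Fin (M+1) → ℝ) :
    ∑ l ∈ Finset.Ici k.succ, f l = ∑ l ∈ Finset.Ici k, f l.succ := by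
  rw [Ici_succ_eq, Finset.sum_map]; rfl

lemma Ici_zero {M : ℕ} : Finset.Ici (0 : Fin (M+1)) = Finset.univ := by
  ext l; simp [Fin.zero_le]

lemma PL_succ {M : ℕ} (v : Fin (M+1) → ℝ) (p : Fin (M+1)) (e : Equiv.Perm (Fin M)) :
    PL v (Equiv.Perm.decomposeFin.symm (p, e))
      = (v p / ∑ l, v l) * PL (fun m => v (Equiv.swap 0 p m.succ)) e := by
  set π := Equiv.Perm.decomposeFin.symm (p, e) with hπ
  unfold PL
  rw [Fin.prod_univ_succ]
  congr 1
  · rw [Ici_zero, Equiv.sum_comp π v]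
    congr 1
    rw [hπ, Equiv.Perm.decomposeFin_symm_apply_zero]
  · refine Finset.prod_congr rfl fun m _ => ?_
    rw [Ici_succ_sum]
    congr 1
    · rw [hπ, Equiv.Perm.decomposeFin_symm_apply_succ]
    · refine Finset.sum_congr rfl fun l _ => ?_
      rw [hπ, Equiv.Perm.decomposeFin_symm_apply_succ]

lemma PL_sum_one : ∀ (M : ℕ) (v : Fin M → ℝ), (∀ m, 0 < v m) →
    ∑ π : Equiv.Perm (Fin M), PL v π = 1 := by
  intro M
  induction M with
  | zero =>
    intro v hv
    rw [Fintype.sum_eq_single 1 (fun π h => absurd (Subsingleton.elim π 1) h)]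
    simp [PL]
  | succ M ih =>
    intro v hv
    have hT : (0 : ℝ) < ∑ l, v l := Finset.sum_pos (fun l _ => hv l) univ_nonempty
    rw [← Equiv.sum_comp (Equiv.Perm.decomposeFin (n := M)).symm, Fintype.sum_prod_type]
    have : ∀ p : Fin (M+1),
        ∑ e : Equiv.Perm (Fin M), PL v (Equiv.Perm.decomposeFin.symm (p, e)) = v p / ∑ l, v l := by
      intro p
      simp_rw [PL_succ]
      rw [← Finset.mul_sum, ih _ (fun m => hv _), mul_one]
    simp_rw [this]
    rw [← Finset.sum_div, div_self hT.ne']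

lemma PL_marginal : ∀ (M : ℕ) (v : Fin M → ℝ), (∀ m, 0 < v m) → ∀ (i j : Fin M), i ≠ j →
    ∑ π ∈ univ.filter (fun π : Equiv.Perm (Fin M) => π.symm i < π.symm j), PL v π
      = v i / (v i + v j) := by
  intro M
  induction M with
  | zero => intro v hv i j hij; exact i.elim0
  | succ M ih =>
    intro v hv i j hij
    have hT : (0 : ℝ) < ∑ l, v l := Finset.sum_pos (fun l _ => hv l) univ_nonempty
    have hvij : (0:ℝ) < v i + v j := add_pos (hv i) (hv j)
    rw [Finset.sum_filter,
      ← Equiv.sum_comp (Equiv.Perm.decomposeFin (n := M)).symm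
        (fun π => if π.symm i < π.symm j then PL v π else 0),
      Fintype.sum_prod_type]
    set F : Fin (M+1) → ℝ := fun p =>
      ∑ e : Equiv.Perm (Fin M),
        if (Equiv.Perm.decomposeFin.symm (p, e)).symm i < (Equiv.Perm.decomposeFin.symm (p, e)).symm j
        then PL v (Equiv.Perm.decomposeFin.symm (p, e)) else 0 with hF
    show ∑ p, F p = v i / (v i + v j)
    -- generic symm computation
    have hsymm : ∀ (p : Fin (M+1)) (e : Equiv.Perm (Fin M)) (a : Fin (M+1)) (ha : a ≠ p),
        (Equiv.Perm.decomposeFin.symm (p, e)).symm a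
          = (e.symm ((Equiv.swap 0 p a).pred (by
              intro h0
              apply ha
              have := congrArg (Equiv.swap (0:Fin (M+1)) p) h0
              rwa [Equiv.swap_apply_self, Equiv.swap_apply_left] at this))).succ := by
      intro p e a ha
      rw [Equiv.symm_apply_eq, Equiv.Perm.decomposeFin_symm_apply_succ, Equiv.apply_symm_apply,
        Fin.succ_pred, Equiv.swap_apply_self]
    have hsymm0 : ∀ (p : Fin (M+1)) (e : Equiv.Perm (Fin M)) (a : Fin (M+1)),
        (Equiv.Perm.decomposeFin.symm (p, e)).symm a = 0 ↔ a = p := by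
      intro p e a
      rw [Equiv.symm_apply_eq, Equiv.Perm.decomposeFin_symm_apply_zero]
    have hFi : F i = v i / ∑ l, v l := by
      rw [hF]
      have : ∀ e : Equiv.Perm (Fin M),
          (Equiv.Perm.decomposeFin.symm (i, e)).symm i < (Equiv.Perm.decomposeFin.symm (i, e)).symm j := by
        intro e
        have h1 : (Equiv.Perm.decomposeFin.symm (i, e)).symm i = 0 := (hsymm0 i e i).mpr rfl
        have h2 : (Equiv.Perm.decomposeFin.symm (i, e)).symm j ≠ 0 :=
          fun h => hij ((hsymm0 i e j).mp h).symm
        rw [h1]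
        exact Fin.pos_iff_ne_zero.mpr h2
      simp only [if_pos (this _)]
      simp_rw [PL_succ]
      rw [← Finset.mul_sum, PL_sum_one M _ (fun m => hv _), mul_one]
    have hFj : F j = 0 := by
      rw [hF]
      refine Finset.sum_eq_zero fun e _ => ?_
      rw [if_neg]
      rw [(hsymm0 j e j).mpr rfl]
      exact Fin.not_lt_zero _  -- maybe named differently
    have hFother : ∀ p, p ≠ i → p ≠ j → F p = (v p / ∑ l, v l) * (v i / (v i + v j)) := by
      intro p hpi hpj
      have hip : i ≠ p := fun h => hpi h.symm
      have hjp : j ≠ p := fun h => hpj h.symm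
      have hi0 : Equiv.swap (0:Fin (M+1)) p i ≠ 0 := by
        intro h0
        apply hip
        have := congrArg (Equiv.swap (0:Fin (M+1)) p) h0
        rwa [Equiv.swap_apply_self, Equiv.swap_apply_left] at this
      have hj0 : Equiv.swap (0:Fin (M+1)) p j ≠ 0 := by
        intro h0
        apply hjp
        have := congrArg (Equiv.swap (0:Fin (M+1)) p) h0
        rwa [Equiv.swap_apply_self, Equiv.swap_apply_left] at this
      set qi := (Equiv.swap (0:Fin (M+1)) p i).pred hi0 with hqi
      set qj := (Equiv.swap (0:Fin (M+1)) p j).pred hj0 with hqj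
      have hqij : qi ≠ qj := by
        intro h
        apply hij
        have h2 : Equiv.swap (0:Fin (M+1)) p i = Equiv.swap (0:Fin (M+1)) p j := by
          rw [← Fin.succ_pred _ hi0, ← Fin.succ_pred _ hj0, ← hqi, ← hqj, h]
        exact (Equiv.swap _ _).injective h2
      have hcond : ∀ e : Equiv.Perm (Fin M),
          ((Equiv.Perm.decomposeFin.symm (p, e)).symm i < (Equiv.Perm.decomposeFin.symm (p, e)).symm j)
            ↔ e.symm qi < e.symm qj := by
        intro e
        rw [hsymm p e i hip, hsymm p e j hjp]
        exact Fin.succ_lt_succ_iff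
      rw [hF]
      simp only [PL_succ]
      simp_rw [hcond]
      have hpull : ∀ x : Equiv.Perm (Fin M),
          (if (Equiv.symm x) qi < (Equiv.symm x) qj
            then (v p / ∑ l, v l) * PL (fun m => v (Equiv.swap 0 p m.succ)) x else 0)
          = (v p / ∑ l, v l) * (if (Equiv.symm x) qi < (Equiv.symm x) qj
            then PL (fun m => v (Equiv.swap 0 p m.succ)) x else 0) := by
        intro x; split <;> simp
      simp_rw [hpull]
      rw [← Finset.mul_sum, ← Finset.sum_filter, ih _ (fun m => hv _) qi qj hqij]
      have e1 : v (Equiv.swap (0:Fin (M+1)) p qi.succ) = v i := by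
        rw [hqi, Fin.succ_pred, Equiv.swap_apply_self]
      have e2 : v (Equiv.swap (0:Fin (M+1)) p qj.succ) = v j := by
        rw [hqj, Fin.succ_pred, Equiv.swap_apply_self]
      simp only [e1, e2]
    have hji : j ≠ i := fun h => hij h.symm
    rw [← Finset.add_sum_erase _ F (mem_univ i),
      ← Finset.add_sum_erase _ F (Finset.mem_erase.mpr ⟨hji, mem_univ j⟩)]
    have hrest : ∑ p ∈ (univ.erase i).erase j, F p
        = ((∑ l, v l) - v i - v j) / (∑ l, v l) * (v i / (v i + v j)) := by
      rw [Finset.sum_congr rfl (fun p hp => hFother p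
        (Finset.ne_of_mem_erase (Finset.mem_of_mem_erase hp)) (Finset.ne_of_mem_erase hp))]
      simp_rw [div_mul_eq_mul_div, ← Finset.sum_div, ← Finset.sum_mul]
      rw [Finset.sum_erase_eq_sub (Finset.mem_erase.mpr ⟨hji, mem_univ j⟩),
        Finset.sum_erase_eq_sub (mem_univ i)]
    rw [hFi, hFj, hrest]
    field_simp
    ring

theorem PL_pairwise_marginal {M : ℕ} (v : Fin M → ℝ) (hv : ∀ m, 0 < v m)
    (i j : Fin M) (hij : i ≠ j) :
    ∑ π ∈ univ.filter (fun π : Equiv.Perm (Fin M) => π.symm i < π.symm j), PL v π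
      = v i / (v i + v j) := by
  exact PL_marginal M v hv i j hij
end

section
/- Under the Mallows model with Kendall tau distance, center ranking π₀, and spread θ ≥ 0: if i precedes j in π₀, then the marginal probability P(i ≻ j) ≥ 1/2. -/
open Finset

def kendall {M : ℕ} (σ τ : Equiv.Perm (Fin M)) : ℕ :=
  (univ.filter (fun p : Fin M × Fin M => p.1 < p.2 ∧
    ((σ.symm p.1 < σ.symm p.2) ↔ ¬ (τ.symm p.1 < τ.symm p.2)))).card

section aux

variable {M : ℕ}

lemma flip_iff {a b c d : Fin M} (hab : a ≠ b) (hcd : c ≠ d)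
    (h : a < b ↔ ¬ c < d) : b < a ↔ ¬ d < c := by
  have h1 : a.val ≠ b.val := fun hh => hab (Fin.ext hh)
  have h2 : c.val ≠ d.val := fun hh => hcd (Fin.ext hh)
  simp only [Fin.lt_def] at h ⊢
  omega

lemma perm_symm_mul (s σ : Equiv.Perm (Fin M)) (x : Fin M) :
    (s * σ).symm x = σ.symm (s.symm x) := rfl

lemma kendall_two (σ τ : Equiv.Perm (Fin M)) :
    2 * kendall σ τ = ∑ p : Fin M × Fin M,
      (if p.1 ≠ p.2 ∧ ((σ.symm p.1 < σ.symm p.2) ↔ ¬ (τ.symm p.1 < τ.symm p.2)) then 1 else 0) := by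
  classical
  rw [← Finset.card_filter]
  have hunion : (univ.filter (fun p : Fin M × Fin M => p.1 ≠ p.2 ∧
      ((σ.symm p.1 < σ.symm p.2) ↔ ¬ (τ.symm p.1 < τ.symm p.2)))) =
      (univ.filter (fun p : Fin M × Fin M => p.1 < p.2 ∧
      ((σ.symm p.1 < σ.symm p.2) ↔ ¬ (τ.symm p.1 < τ.symm p.2)))) ∪
      (univ.filter (fun p : Fin M × Fin M => p.2 < p.1 ∧
      ((σ.symm p.1 < σ.symm p.2) ↔ ¬ (τ.symm p.1 < τ.symm p.2)))) := by
    ext p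
    simp only [mem_filter, mem_union, mem_univ, true_and]
    constructor
    · rintro ⟨hne, hd⟩
      rcases hne.lt_or_gt with h | h
      · exact Or.inl ⟨h, hd⟩
      · exact Or.inr ⟨h, hd⟩
    · rintro (⟨h, hd⟩ | ⟨h, hd⟩)
      · exact ⟨h.ne, hd⟩
      · exact ⟨h.ne', hd⟩
  have hdisj : Disjoint (univ.filter (fun p : Fin M × Fin M => p.1 < p.2 ∧
      ((σ.symm p.1 < σ.symm p.2) ↔ ¬ (τ.symm p.1 < τ.symm p.2))))
      (univ.filter (fun p : Fin M × Fin M => p.2 < p.1 ∧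
      ((σ.symm p.1 < σ.symm p.2) ↔ ¬ (τ.symm p.1 < τ.symm p.2)))) := by
    rw [Finset.disjoint_left]
    intro p hp hq
    simp only [mem_filter] at hp hq
    exact absurd hq.2.1 (lt_asymm hp.2.1)
  have hcard : (univ.filter (fun p : Fin M × Fin M => p.2 < p.1 ∧
      ((σ.symm p.1 < σ.symm p.2) ↔ ¬ (τ.symm p.1 < τ.symm p.2)))).card =
      kendall σ τ := by
    unfold kendall
    apply Finset.card_bij (fun p _ => p.swap)
    · intro p hp
      simp only [mem_filter, mem_univ, true_and, Prod.fst_swap, Prod.snd_swap] at hp ⊢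
      refine ⟨hp.1, ?_⟩
      have hne : p.1 ≠ p.2 := hp.1.ne'
      exact flip_iff (fun h => hne (σ.symm.injective h)) (fun h => hne (τ.symm.injective h)) hp.2
    · intro p _ q _ h
      exact Prod.swap_injective h
    · intro q hq
      refine ⟨q.swap, ?_, by simp⟩
      simp only [mem_filter, mem_univ, true_and, Prod.fst_swap, Prod.snd_swap] at hq ⊢
      refine ⟨hq.1, ?_⟩
      have hne : q.1 ≠ q.2 := hq.1.ne
      exact flip_iff (fun h => hne (σ.symm.injective h)) (fun h => hne (τ.symm.injective h)) hq.2
  rw [hunion, Finset.card_union_of_disjoint hdisj, hcard]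
  unfold kendall
  ring

lemma nokey (σ π₀ : Equiv.Perm (Fin M)) {i j : Fin M} (hij : i ≠ j) (x y : Fin M)
    (hσ : σ.symm i < σ.symm j) (hπ : π₀.symm i < π₀.symm j)
    (hB : ¬ ((π₀.symm x < π₀.symm y) ↔
      (π₀.symm (Equiv.swap i j x) < π₀.symm (Equiv.swap i j y)))) :
    ((σ.symm x < σ.symm y) ↔ (π₀.symm x < π₀.symm y)) ∨
    ((σ.symm (Equiv.swap i j x) < σ.symm (Equiv.swap i j y)) ↔
      (π₀.symm (Equiv.swap i j x) < π₀.symm (Equiv.swap i j y))) := by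
  simp only [Equiv.swap_apply_def] at hB ⊢
  split_ifs at hB ⊢ <;>
    subst_vars <;>
    (simp only [Fin.lt_def, Fin.ext_iff, ne_eq, not_true] at *) <;> omega

def dfun (σ τ : Equiv.Perm (Fin M)) (p : Fin M × Fin M) : ℕ :=
  if p.1 ≠ p.2 ∧ ((σ.symm p.1 < σ.symm p.2) ↔ ¬ (τ.symm p.1 < τ.symm p.2)) then 1 else 0

def tfun (σ τ : Equiv.Perm (Fin M)) (i j : Fin M) (p : Fin M × Fin M) : ℕ :=
  if p.1 ≠ p.2 ∧ ((σ.symm (Equiv.swap i j p.1) < σ.symm (Equiv.swap i j p.2)) ↔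
    ¬ (τ.symm p.1 < τ.symm p.2)) then 1 else 0

lemma kendall_swap_le (σ π₀ : Equiv.Perm (Fin M)) {i j : Fin M} (hij : i ≠ j)
    (hσ : σ.symm i < σ.symm j) (hπ : π₀.symm i < π₀.symm j) :
    kendall σ π₀ ≤ kendall (Equiv.swap i j * σ) π₀ := by
  have hsymm : ∀ x, (Equiv.swap i j * σ).symm x = σ.symm (Equiv.swap i j x) := by
    intro x
    rw [perm_symm_mul, Equiv.symm_swap]
  suffices h : 2 * kendall σ π₀ ≤ 2 * kendall (Equiv.swap i j * σ) π₀ by omega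
  rw [kendall_two, kendall_two]
  simp only [hsymm]
  show ∑ p : Fin M × Fin M, dfun σ π₀ p ≤ ∑ p : Fin M × Fin M, tfun σ π₀ i j p
  set g : (Fin M × Fin M) ≃ (Fin M × Fin M) :=
    (Equiv.swap i j).prodCongr (Equiv.swap i j) with hgdef
  have hg : ∀ p : Fin M × Fin M, g p = (Equiv.swap i j p.1, Equiv.swap i j p.2) :=
    fun p => rfl
  have hpt : ∀ p : Fin M × Fin M,
      dfun σ π₀ p + dfun σ π₀ (g p) ≤ tfun σ π₀ i j p + tfun σ π₀ i j (g p) := by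
    rintro ⟨x, y⟩
    by_cases hxy : x = y
    · subst hxy
      simp [dfun, tfun, hg]
    · have hsxy : Equiv.swap i j x ≠ Equiv.swap i j y :=
        fun h => hxy ((Equiv.swap i j).injective h)
    -- abbreviations
      have hkey := nokey σ π₀ hij x y hσ hπ
      simp only [dfun, tfun, hg, Equiv.swap_apply_self, ne_eq, hxy, hsxy,
        not_false_eq_true, true_and]
      by_cases hA : σ.symm x < σ.symm y <;>
        by_cases hB : π₀.symm x < π₀.symm y <;>
        by_cases hA' : σ.symm (Equiv.swap i j x) < σ.symm (Equiv.swap i j y) <;>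
        by_cases hB' : π₀.symm (Equiv.swap i j x) < π₀.symm (Equiv.swap i j y) <;>
        simp only [hA, hB, hA', hB', iff_true, iff_false, not_true, not_false_eq_true,
          if_true, if_false, not_not] <;>
        first
        | omega
        | (exfalso; rcases hkey (by tauto) with h | h <;> tauto)
  have hsum : ∑ p : Fin M × Fin M, (dfun σ π₀ p + dfun σ π₀ (g p)) ≤
      ∑ p : Fin M × Fin M, (tfun σ π₀ i j p + tfun σ π₀ i j (g p)) :=
    Finset.sum_le_sum fun p _ => hpt p
  rw [Finset.sum_add_distrib, Finset.sum_add_distrib,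
    Equiv.sum_comp g (dfun σ π₀), Equiv.sum_comp g (tfun σ π₀ i j)] at hsum
  omega

end aux

theorem mallows_marginal_ge_half {M : ℕ} (θ : ℝ) (hθ : 0 ≤ θ)
    (π₀ : Equiv.Perm (Fin M)) (i j : Fin M) (hij : i ≠ j)
    (hcenter : π₀.symm i < π₀.symm j) :
    (∑ π ∈ univ.filter (fun π : Equiv.Perm (Fin M) => π.symm i < π.symm j),
        Real.exp (-θ * kendall π π₀)) /
      (∑ π : Equiv.Perm (Fin M), Real.exp (-θ * kendall π π₀)) ≥ 1/2 := by
  classical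
  set E : Equiv.Perm (Fin M) → ℝ := fun π => Real.exp (-θ * kendall π π₀) with hE
  have hpos : ∀ π, 0 < E π := fun π => Real.exp_pos _
  set S : Finset (Equiv.Perm (Fin M)) :=
    univ.filter (fun π : Equiv.Perm (Fin M) => π.symm i < π.symm j) with hS
  set C : Finset (Equiv.Perm (Fin M)) :=
    univ.filter (fun π : Equiv.Perm (Fin M) => ¬ π.symm i < π.symm j) with hC
  have hsplit : ∑ π, E π = ∑ π ∈ S, E π + ∑ π ∈ C, E π :=
    (Finset.sum_filter_add_sum_filter_not univ _ E).symm
  -- the pairing map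
  have hmem : ∀ π ∈ C, (Equiv.swap i j * π).symm i < (Equiv.swap i j * π).symm j ∧
      E π ≤ E (Equiv.swap i j * π) := by
    intro π hπ
    have hπ' : ¬ π.symm i < π.symm j := by
      simpa [hC] using hπ
    have hne : π.symm i ≠ π.symm j := fun h => hij (π.symm.injective h)
    have hlt : π.symm j < π.symm i := (hne.lt_or_gt).resolve_left hπ'
    have h1 : (Equiv.swap i j * π).symm i = π.symm j := by
      rw [perm_symm_mul, Equiv.symm_swap, Equiv.swap_apply_left]
    have h2 : (Equiv.swap i j * π).symm j = π.symm i := by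
      rw [perm_symm_mul, Equiv.symm_swap, Equiv.swap_apply_right]
    have horder : (Equiv.swap i j * π).symm i < (Equiv.swap i j * π).symm j := by
      rw [h1, h2]; exact hlt
    refine ⟨horder, ?_⟩
    have hk : kendall (Equiv.swap i j * π) π₀ ≤
        kendall (Equiv.swap i j * (Equiv.swap i j * π)) π₀ :=
      kendall_swap_le (Equiv.swap i j * π) π₀ hij horder hcenter
    rw [← mul_assoc, Equiv.swap_mul_self, one_mul] at hk
    have : -θ * (kendall π π₀ : ℝ) ≤ -θ * (kendall (Equiv.swap i j * π) π₀ : ℝ) := by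
      apply mul_le_mul_of_nonpos_left _ (by linarith)
      exact_mod_cast hk
    exact Real.exp_le_exp.mpr this
  have hle : ∑ π ∈ C, E π ≤ ∑ π ∈ S, E π := by
    calc ∑ π ∈ C, E π ≤ ∑ π ∈ C, E (Equiv.swap i j * π) :=
          Finset.sum_le_sum fun π hπ => (hmem π hπ).2
      _ = ∑ π ∈ C.image (fun π => Equiv.swap i j * π), E π := by
          rw [Finset.sum_image]
          intro a _ b _ h
          exact mul_left_cancel h
      _ ≤ ∑ π ∈ S, E π := by
          apply Finset.sum_le_sum_of_subset_of_nonneg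
          · intro π hπ
            simp only [Finset.mem_image] at hπ
            obtain ⟨a, ha, rfl⟩ := hπ
            simp only [hS, mem_filter, mem_univ, true_and]
            exact (hmem a ha).1
          · intro π _ _
            exact (hpos π).le
  have hSpos : 0 < ∑ π ∈ S, E π := by
    apply Finset.sum_pos (fun π _ => hpos π)
    exact ⟨π₀, by simp [hS, hcenter]⟩
  have hφpos : 0 < ∑ π, E π := by
    rw [hsplit]
    have hCnn : 0 ≤ ∑ π ∈ C, E π := Finset.sum_nonneg fun π _ => (hpos π).le
    linarith
  rw [ge_iff_le, le_div_iff₀ hφpos]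
  rw [hsplit]
  linarith
end
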